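/- arXiv:2506.12306 — 3 statements merged into one kernel-verified Lean document; each statement's English description precedes it below -/
import Mathlib

section
/- Let G be a finite group and S ⊆ G with 1 ∈ S. If the bi-Cayley graph BCay(G, S) is isomorphic to the disjoint union of two copies of K_{|G|/2, |G|/2}, then S is a subgroup of G of index 2. -/
/-- The bi-Cayley graph `BCay(G,S)`: vertex set is two copies of `G`
(indexed by `Bool`), with edges `{x₁, (s*x)₂}` for `s ∈ S`, `x ∈ G`. -/
def BCay (G : Type*) [Group G] (S : Set G) : SimpleGraph (G × Bool) where
  Adj v w :=
    (v.2 = false ∧ w.2 = true ∧ w.1 * v.1⁻¹ ∈ S) ∨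
    (v.2 = true ∧ w.2 = false ∧ v.1 * w.1⁻¹ ∈ S)
  symm := by
    constructor
    rintro v w (⟨h1, h2, h3⟩ | ⟨h1, h2, h3⟩)
    · exact Or.inr ⟨h2, h1, h3⟩
    · exact Or.inl ⟨h2, h1, h3⟩
  loopless := by
    constructor
    rintro v (⟨h1, h2, _⟩ | ⟨h1, h2, _⟩) <;> simp [h1] at h2

/-- The disjoint union of two copies of a graph `Γ`. -/
def twoCopies {V : Type*} (Γ : SimpleGraph V) : SimpleGraph (Bool × V) where
  Adj v w := v.1 = w.1 ∧ Γ.Adj v.2 w.2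
  symm := by constructor; rintro v w ⟨h1, h2⟩; exact ⟨h1.symm, h2.symm⟩
  loopless := by constructor; rintro v ⟨_, h⟩; exact Γ.loopless.irrefl _ h

section Aux

variable {G : Type*} [Group G] (S : Set G)

/-- Right translation is an automorphism of the bi-Cayley graph. -/
def rightMulIso (g : G) : BCay G S ≃g BCay G S where
  toEquiv := Equiv.prodCongr (Equiv.mulRight g) (Equiv.refl Bool)
  map_rel_iff' := by
    rintro ⟨x, bx⟩ ⟨y, by'⟩
    simp [BCay, Equiv.prodCongr, mul_assoc]

lemma twoCopies_reachable_fst {V : Type*} {Γ : SimpleGraph V} {v w : Bool × V}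
    (h : (twoCopies Γ).Reachable v w) : v.1 = w.1 := by
  obtain ⟨p⟩ := h
  induction p with
  | nil => rfl
  | cons h _ ih => exact h.1.trans ih

lemma bcay_adj_up (hS : (1 : G) ∈ S) {s x : G} (hs : s ∈ S) :
    (BCay G S).Adj (x, false) (s * x, true) := by
  refine Or.inl ⟨rfl, rfl, ?_⟩
  simpa [mul_assoc] using hs

lemma bcay_adj_down (hS : (1 : G) ∈ S) (x : G) :
    (BCay G S).Adj (x, true) (x, false) := by
  exact Or.inr ⟨rfl, rfl, by simpa using hS⟩

lemma reach_closure (hS : (1 : G) ∈ S) {h : G} (hh : h ∈ Subgroup.closure S) :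
    (BCay G S).Reachable (1, false) (h, false) := by
  induction hh using Subgroup.closure_induction with
  | mem s hs =>
    have h1 : (BCay G S).Adj (1, false) (s, true) := by
      simpa using bcay_adj_up S hS (x := 1) hs
    exact (h1.reachable).trans (bcay_adj_down S hS s).reachable
  | one => exact SimpleGraph.Reachable.refl _
  | mul a b _ _ pa pb =>
    have h2 : (BCay G S).Reachable (1 * b, false) (a * b, false) :=
      pa.map (rightMulIso S b).toHom
    rw [one_mul] at h2
    exact pb.trans h2
  | inv a _ pa =>
    have := pa.map (rightMulIso S a⁻¹).toHom
    have h2 : (BCay G S).Reachable (1 * a⁻¹, false) (a * a⁻¹, false) := this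
    rw [one_mul, mul_inv_cancel] at h2
    exact h2.symm

end Aux

/-- If `1 ∈ S` and `BCay(G,S)` is isomorphic to the disjoint union of two copies of
`K_{|G|/2,|G|/2}`, then `S` is a subgroup of `G` of index 2. -/
theorem stmt_5 (G : Type*) [Group G] [Fintype G] (hG : Even (Fintype.card G))
    (S : Set G) (hS : (1 : G) ∈ S)
    (h : Nonempty (BCay G S ≃g
      twoCopies (completeBipartiteGraph (Fin (Fintype.card G / 2))
        (Fin (Fintype.card G / 2))))) :
    ∃ H : Subgroup G, H.index = 2 ∧ (H : Set G) = S := by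
  classical
  obtain ⟨f⟩ := h
  set n := Fintype.card G with hn'
  set m := n / 2 with hm'
  have hn : m * 2 = n := Nat.div_mul_cancel hG.two_dvd
  have hm : 0 < m := by
    have : 0 < n := Fintype.card_pos
    omega
  -- Step 1: |S| = m via degrees
  have e1 : S ≃ (BCay G S).neighborSet (1, false) :=
    { toFun := fun s => ⟨(s.1, true), Or.inl ⟨rfl, rfl, by simpa using s.2⟩⟩
      invFun := fun w => ⟨w.1.1, by
        obtain ⟨w, hw⟩ := w
        rcases hw with ⟨_, _, hw3⟩ | ⟨hw1, _, _⟩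
        · simpa using hw3
        · simp at hw1⟩
      left_inv := fun s => rfl
      right_inv := fun w => by
        obtain ⟨w, hw⟩ := w
        rcases hw with ⟨_, hw2, _⟩ | ⟨hw1, _, _⟩
        · ext <;> simp [hw2.symm]
        · simp at hw1 }
  have e2 := f.mapNeighborSet (1, false)
  have cardTarget : ∀ v : Bool × (Fin m ⊕ Fin m),
      Fintype.card ((twoCopies (completeBipartiteGraph (Fin m) (Fin m))).neighborSet v) = m := by
    rintro ⟨b, (i | i)⟩
    · have : (twoCopies (completeBipartiteGraph (Fin m) (Fin m))).neighborSet (b, Sum.inl i)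
          ≃ Fin m :=
        { toFun := fun w => by
            rcases w with ⟨⟨b', (j | j)⟩, hw⟩
            · exact absurd hw (by simp [twoCopies])
            · exact j
          invFun := fun j => ⟨(b, Sum.inr j), ⟨rfl, by simp⟩⟩
          left_inv := by
            rintro ⟨⟨b', (j | j)⟩, hw⟩
            · exact absurd hw (by simp [twoCopies])
            · obtain ⟨hb, _⟩ := hw
              simp at hb
              simp [hb]
          right_inv := fun j => rfl }
      simp [Fintype.card_congr this]
    · have : (twoCopies (completeBipartiteGraph (Fin m) (Fin m))).neighborSet (b, Sum.inr i)
          ≃ Fin m :=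
        { toFun := fun w => by
            rcases w with ⟨⟨b', (j | j)⟩, hw⟩
            · exact j
            · exact absurd hw (by simp [twoCopies])
          invFun := fun j => ⟨(b, Sum.inl j), ⟨rfl, by simp⟩⟩
          left_inv := by
            rintro ⟨⟨b', (j | j)⟩, hw⟩
            · obtain ⟨hb, _⟩ := hw
              simp at hb
              simp [hb]
            · exact absurd hw (by simp [twoCopies])
          right_inv := fun j => rfl }
      simp [Fintype.card_congr this]
  have cardS : Fintype.card S = m := by
    have := Fintype.card_congr (e1.trans e2)
    rw [this, cardTarget]
  -- Step 2: closure S has at most m elements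
  set H := Subgroup.closure S with hH
  have hSH : S ⊆ (H : Set G) := Subgroup.subset_closure
  set b0 := (f (1, false)).1 with hb0
  have key : ∀ x : G, x ∈ H → ∀ ε : Bool, (f (x, ε)).1 = b0 := by
    intro x hx ε
    have hr : (BCay G S).Reachable (1, false) (x, ε) := by
      cases ε
      · exact reach_closure S hS hx
      · exact (reach_closure S hS hx).trans (bcay_adj_down S hS x).reachable.symm
    exact (twoCopies_reachable_fst (hr.map f.toHom)).symm
  have inj : Function.Injective
      (fun p : H × Bool => (⟨f (p.1.1, p.2), key p.1.1 p.1.2 p.2⟩ :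
        {w : Bool × (Fin m ⊕ Fin m) // w.1 = b0})) := by
    rintro ⟨⟨x, hx⟩, ε⟩ ⟨⟨y, hy⟩, ε'⟩ hxy
    simp only [Subtype.mk.injEq] at hxy
    have := f.injective hxy
    simp only [Prod.mk.injEq] at this
    simp [this.1, this.2]
  have cardsub : Fintype.card {w : Bool × (Fin m ⊕ Fin m) // w.1 = b0} = 2 * m := by
    have e : {w : Bool × (Fin m ⊕ Fin m) // w.1 = b0} ≃ (Fin m ⊕ Fin m) :=
      { toFun := fun w => w.1.2
        invFun := fun v => ⟨(b0, v), rfl⟩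
        left_inv := by
          rintro ⟨⟨b, v⟩, hb⟩
          have hb' : b = b0 := hb
          simp [Subtype.ext_iff, Prod.ext_iff, hb']
        right_inv := fun v => rfl }
    simp [Fintype.card_congr e, two_mul]
  have hle : Fintype.card H * 2 ≤ 2 * m := by
    have := Fintype.card_le_of_injective _ inj
    simpa [cardsub, Fintype.card_prod] using this
  have hge : m ≤ Fintype.card H := by
    have : Fintype.card S ≤ Fintype.card H :=
      Fintype.card_le_of_injective (Set.inclusion hSH) (Set.inclusion_injective hSH)
    omega
  have hcardH : Fintype.card H = m := by omega
  -- S = H as sets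
  have hSeq : (H : Set G) = S := by
    have hsub : S.toFinset ⊆ (H : Set G).toFinset := Set.toFinset_subset_toFinset.mpr hSH
    have hc : (H : Set G).toFinset.card ≤ S.toFinset.card := by
      rw [Set.toFinset_card, Set.toFinset_card, cardS]
      have : Fintype.card (H : Set G) = Fintype.card H := Fintype.card_congr (Equiv.refl _)
      omega
    have := Finset.eq_of_subset_of_card_le hsub hc
    rw [← Set.toFinset_inj, this]
  refine ⟨H, ?_, hSeq⟩
  have hmi : Nat.card H * H.index = Nat.card G := H.card_mul_index
  rw [Nat.card_eq_fintype_card, Nat.card_eq_fintype_card, hcardH] at hmi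
  have h2 : m * H.index = m * 2 := by rw [hmi, ← hn', ← hn]
  exact Nat.eq_of_mul_eq_mul_left hm h2
end

section
/- Let G be a finite abelian group such that any two subgroups of G of the same order are isomorphic. Then every Sylow p-subgroup of G is either elementary abelian or cyclic. -/
open Subgroup Pointwise

/-- A non-cyclic finite abelian group contains two elements of prime order with the
second not a power of the first. -/
lemma aux_two_indep {Q : Type*} [CommGroup Q] [Finite Q] (hnc : ¬ IsCyclic Q) :
    ∃ a b : Q, (orderOf a).Prime ∧ (orderOf b).Prime ∧ b ∉ Subgroup.zpowers a := by
  classical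
  obtain ⟨ι, hι, n, h1, ⟨e⟩⟩ := CommGroup.equiv_prod_multiplicative_zmod_of_finite Q
  have hns : Nontrivial ι := by
    rw [← not_subsingleton_iff_nontrivial]
    intro hs
    apply hnc
    rcases isEmpty_or_nonempty ι with hE | hne
    · haveI : Subsingleton (∀ i, Multiplicative (ZMod (n i))) :=
        ⟨fun f g => funext fun i => (hE.false i).elim⟩
      haveI : Subsingleton Q := e.toEquiv.subsingleton
      exact isCyclic_of_subsingleton
    · obtain ⟨i0⟩ := hne
      haveI : Unique ι := ⟨⟨i0⟩, fun a => Subsingleton.elim _ _⟩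
      haveI : NeZero (n i0) := ⟨by have := h1 i0; omega⟩
      have : IsCyclic (∀ i, Multiplicative (ZMod (n i))) :=
        isCyclic_of_surjective (MulEquiv.piUnique fun i => Multiplicative (ZMod (n i))).symm
          (MulEquiv.surjective _)
      exact isCyclic_of_surjective e.symm e.symm.surjective
  obtain ⟨i, j, hij⟩ := hns
  have exElem : ∀ k : ι, ∃ g : Multiplicative (ZMod (n k)), (orderOf g).Prime := by
    intro k
    have hk := h1 k
    obtain ⟨q, hq, hqd⟩ := (n k).exists_prime_and_dvd (by omega)
    haveI : NeZero (n k) := ⟨by omega⟩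
    haveI := Fact.mk hq
    obtain ⟨g, hg⟩ := exists_prime_orderOf_dvd_card (G := Multiplicative (ZMod (n k))) q
      (by simpa [ZMod.card] using hqd)
    exact ⟨g, hg ▸ hq⟩
  obtain ⟨gi, hgi⟩ := exElem i
  obtain ⟨gj, hgj⟩ := exElem j
  refine ⟨e.symm (Pi.mulSingle i gi), e.symm (Pi.mulSingle j gj), ?_, ?_, ?_⟩
  · rwa [e.symm.orderOf_eq, orderOf_piMulSingle]
  · rwa [e.symm.orderOf_eq, orderOf_piMulSingle]
  · rintro ⟨z, hz⟩
    have h2 : (Pi.mulSingle i gi : ∀ k, Multiplicative (ZMod (n k))) ^ z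
        = Pi.mulSingle j gj := by
      have := congrArg e hz
      rwa [map_zpow, e.apply_symm_apply, e.apply_symm_apply] at this
    have h3 := congrFun h2 j
    rw [Pi.pow_apply, Pi.mulSingle_eq_of_ne (Ne.symm hij), one_zpow,
      Pi.mulSingle_eq_same] at h3
    rw [← h3, orderOf_one] at hgj
    exact Nat.not_prime_one hgj

/-- If any two subgroups of a finite abelian group `G` of the same order are
isomorphic, then every Sylow `p`-subgroup of `G` is elementary abelian or cyclic. -/
theorem stmt_9 (G : Type*) [CommGroup G] [Fintype G]
    (h : ∀ H K : Subgroup G, Nat.card H = Nat.card K → Nonempty (H ≃* K)) :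
    ∀ (p : ℕ), p.Prime → ∀ P : Sylow p G,
      (∀ x : (P : Subgroup G), x ≠ 1 → orderOf x = p) ∨ IsCyclic (P : Subgroup G) := by
  intro p hp P
  haveI := Fact.mk hp
  by_cases hc : IsCyclic (P : Subgroup G)
  · exact Or.inr hc
  left
  intro x hx1
  by_contra hxp
  -- `x` has order `p ^ m` with `m ≥ 2`
  obtain ⟨m, hm⟩ := IsPGroup.iff_orderOf.mp P.isPGroup' x
  have hm2 : 2 ≤ m := by
    rcases Nat.lt_or_ge m 2 with hlt | hge
    · interval_cases m
      · simp [pow_zero, orderOf_eq_one_iff] at hm; exact absurd hm hx1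
      · simp [pow_one] at hm; exact absurd hm hxp
    · exact hge
  -- an element `Y : G` of order `p ^ 2`
  set y : (P : Subgroup G) := x ^ (p ^ (m - 2)) with hy
  have hyo : orderOf y = p ^ 2 := by
    rw [hy, orderOf_pow, hm, Nat.gcd_eq_right (pow_dvd_pow p (by omega)),
      Nat.pow_div (by omega) hp.pos]
    congr 1
    omega
  set Y : G := (y : G) with hY
  have hYo : orderOf Y = p ^ 2 := by
    rw [hY, Subgroup.orderOf_coe]
    exact hyo
  -- two independent elements of order p
  obtain ⟨a, b, hpa, hpb, hba⟩ := aux_two_indep (Q := (P : Subgroup G)) hc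
  -- their orders are p
  have horder : ∀ c : (P : Subgroup G), (orderOf c).Prime → orderOf c = p := by
    intro c hc'
    obtain ⟨k, hk⟩ := IsPGroup.iff_orderOf.mp P.isPGroup' c
    rcases Nat.eq_zero_or_pos k with rfl | hk0
    · rw [hk, pow_zero] at hc'
      exact absurd hc' Nat.not_prime_one
    · have : (orderOf c) ∣ p ^ k := hk ▸ dvd_refl _
      have := (Nat.prime_dvd_prime_iff_eq hc' hp).mp (hc'.dvd_of_dvd_pow this)
      exact this
  have hao : orderOf a = p := horder a hpa
  have hbo : orderOf b = p := horder b hpb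
  set A : G := (a : G) with hA
  set B : G := (b : G) with hB
  have hAo : orderOf A = p := by rw [hA, Subgroup.orderOf_coe]; exact hao
  have hBo : orderOf B = p := by rw [hB, Subgroup.orderOf_coe]; exact hbo
  have hBA : B ∉ Subgroup.zpowers A := by
    rintro ⟨z, hz⟩
    exact hba ⟨z, by ext; exact hz⟩
  -- the subgroups to compare
  set C : Subgroup G := Subgroup.zpowers Y with hC
  set E : Subgroup G := Subgroup.zpowers A ⊔ Subgroup.zpowers B with hE
  have hCcard : Nat.card C = p ^ 2 := by rw [hC, Nat.card_zpowers, hYo]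
  have hEP : E ≤ (P : Subgroup G) := by
    rw [hE]
    exact sup_le ((Subgroup.zpowers_le).mpr a.2) ((Subgroup.zpowers_le).mpr b.2)
  -- card E = p ^ 2
  have hEdvd : Nat.card E ∣ Nat.card (P : Subgroup G) := Subgroup.card_dvd_of_le hEP
  obtain ⟨nn, hPcard⟩ := IsPGroup.iff_card.mp P.isPGroup'
  have hEpow : ∃ t, Nat.card E = p ^ t := by
    have := hPcard ▸ hEdvd
    exact (Nat.dvd_prime_pow hp).mp this |>.imp fun t ht => ht.2
  obtain ⟨t, hEcard⟩ := hEpow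
  have hEle : Nat.card E ≤ p ^ 2 := by
    have h1 : (E : Set G) = (Subgroup.zpowers A : Set G) * (Subgroup.zpowers B : Set G) :=
      Subgroup.mul_normal _ _
    have h2 : Nat.card (E : Set G) ≤
        Nat.card (Subgroup.zpowers A : Set G) * Nat.card (Subgroup.zpowers B : Set G) := by
      rw [h1]; exact Set.natCard_mul_le
    have e1 : Nat.card (E : Set G) = Nat.card E := rfl
    have e2 : Nat.card (Subgroup.zpowers A : Set G) = Nat.card (Subgroup.zpowers A) := rfl
    have e3 : Nat.card (Subgroup.zpowers B : Set G) = Nat.card (Subgroup.zpowers B) := rfl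
    rw [e1, e2, e3, Nat.card_zpowers, Nat.card_zpowers, hAo, hBo, ← sq] at h2
    exact h2
  have hAleE : Subgroup.zpowers A ≤ E := le_sup_left
  have hEne : Nat.card E ≠ p := by
    intro hcontra
    have : Subgroup.zpowers A = E := by
      apply Subgroup.eq_of_le_of_card_ge hAleE
      rw [hcontra, Nat.card_zpowers, hAo]
    exact hBA (this ▸ (le_sup_right : Subgroup.zpowers B ≤ E) (Subgroup.mem_zpowers B))
  have hpleE : p ∣ Nat.card E := by
    have := Subgroup.card_dvd_of_le hAleE
    rwa [Nat.card_zpowers, hAo] at this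
  have hEcard2 : Nat.card E = p ^ 2 := by
    rw [hEcard] at hEle hEne hpleE ⊢
    have ht1 : 1 ≤ t := by
      rcases Nat.eq_zero_or_pos t with rfl | h0
      · rw [pow_zero, Nat.dvd_one] at hpleE
        exact absurd hpleE hp.one_lt.ne'
      · exact h0
    have ht2 : t ≤ 2 := (Nat.pow_le_pow_iff_right hp.one_lt).mp hEle
    have : t ≠ 1 := fun hteq => hEne (by rw [hteq, pow_one])
    have : t = 2 := by omega
    rw [this]
  -- every element of E has p-th power 1
  have hEexp : ∀ g ∈ E, g ^ p = 1 := by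
    have hker : E ≤ (powMonoidHom p : G →* G).ker := by
      rw [hE]
      apply sup_le
      · rw [Subgroup.zpowers_le]
        exact MonoidHom.mem_ker.mpr (by simp [powMonoidHom_apply, ← hAo, pow_orderOf_eq_one])
      · rw [Subgroup.zpowers_le]
        exact MonoidHom.mem_ker.mpr (by simp [powMonoidHom_apply, ← hBo, pow_orderOf_eq_one])
    intro g hg
    simpa [powMonoidHom_apply] using MonoidHom.mem_ker.mp (hker hg)
  -- compare C and E via h
  obtain ⟨f⟩ := h C E (by rw [hCcard, hEcard2])
  set Z : E := f ⟨Y, Subgroup.mem_zpowers Y⟩ with hZ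
  have hZo : orderOf Z = p ^ 2 := by
    rw [hZ, f.orderOf_eq, Subgroup.orderOf_mk]
    exact hYo
  have hZp : Z ^ p = 1 := by
    have : ((Z : G)) ^ p = 1 := hEexp (Z : G) Z.2
    ext
    simpa using this
  have : p ^ 2 ∣ p := hZo ▸ orderOf_dvd_of_pow_eq_one hZp
  have hle := Nat.le_of_dvd hp.pos this
  have : p < p ^ 2 := by nlinarith [hp.two_le]
  omega
end

section
/- Let G be a finite group such that for any two elements s, t ∈ G of the same order, the bi-Cayley graphs BCay(G, {1,s}) and BCay(G, {1,t}) being isomorphic implies there exist g ∈ G and α ∈ Aut(G) with {1,t} = g⁻¹·α({1,s}) or {1,t} = α({1,s}⁻¹)·g. Then G is an FIF-group: for any x, y ∈ G of the same order there is α ∈ Aut(G) with α(x) = y or α(x) = y⁻¹. -/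
open Pointwise

section FIFAux

open Subgroup QuotientGroup

variable {G : Type*} [Group G] [Fintype G]


variable {G : Type*} [Group G] [Fintype G]

private lemma pow_transfer {s t : G} (h : orderOf s = orderOf t) {a b : ℤ}
    (hab : s ^ a = s ^ b) : t ^ a = t ^ b := by
  have h1 : s ^ (a - b) = 1 := by rw [zpow_sub, hab, mul_inv_cancel]
  have h2 : (orderOf s : ℤ) ∣ a - b := orderOf_dvd_iff_zpow_eq_one.mpr h1
  have h3 : t ^ (a - b) = 1 := orderOf_dvd_iff_zpow_eq_one.mp (by rwa [← h])
  have := congrArg (· * t ^ b) h3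
  simpa [zpow_sub, mul_assoc] using this

private lemma rep_spec (s g : G) :
    ∃ k : ℤ, g = s ^ k * (Quotient.mk (rightRel (zpowers s)) g).out := by
  have h := Quotient.exact (Quotient.out_eq (Quotient.mk (rightRel (zpowers s)) g))
  obtain ⟨k, hk⟩ := rightRel_apply.mp h
  simp only at hk
  exact ⟨k, by rw [hk]; group⟩

noncomputable def expQ (s g : G) : ℤ := (rep_spec s g).choose

lemma expQ_spec (s g : G) :
    g = s ^ expQ s g * (Quotient.mk (rightRel (zpowers s)) g).out :=
  (rep_spec s g).choose_spec

noncomputable def Fmap (s t : G)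
    (τ : Quotient (rightRel (zpowers s)) ≃ Quotient (rightRel (zpowers t))) (g : G) : G :=
  t ^ expQ s g * (τ (Quotient.mk (rightRel (zpowers s)) g)).out

lemma Fmap_class (s t : G)
    (τ : Quotient (rightRel (zpowers s)) ≃ Quotient (rightRel (zpowers t))) (g : G) :
    Quotient.mk (rightRel (zpowers t)) (Fmap s t τ g)
      = τ (Quotient.mk (rightRel (zpowers s)) g) := by
  have hrel : rightRel (zpowers t) (Fmap s t τ g)
      ((τ (Quotient.mk (rightRel (zpowers s)) g)).out) := by
    refine rightRel_apply.mpr ⟨-expQ s g, ?_⟩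
    simp [Fmap]
  have h2 : Quotient.mk (rightRel (zpowers t)) (Fmap s t τ g)
      = Quotient.mk (rightRel (zpowers t)) ((τ (Quotient.mk (rightRel (zpowers s)) g)).out) :=
    Quotient.sound hrel
  rw [h2, Quotient.out_eq]

lemma mk_mul_self (s g : G) :
    Quotient.mk (rightRel (zpowers s)) (s * g) = Quotient.mk (rightRel (zpowers s)) g :=
  Quotient.sound (rightRel_apply.mpr ⟨-1, by group⟩)

lemma Fmap_equivariant {s t : G} (h : orderOf s = orderOf t)
    (τ : Quotient (rightRel (zpowers s)) ≃ Quotient (rightRel (zpowers t))) (g : G) :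
    Fmap s t τ (s * g) = t * Fmap s t τ g := by
  have hc := mk_mul_self s g
  have e1 := expQ_spec s (s * g)
  rw [hc] at e1
  have e2 := expQ_spec s g
  have e3 : s ^ expQ s (s * g) = s ^ (1 + expQ s g) := by
    apply mul_right_cancel (b := (Quotient.mk (rightRel (zpowers s)) g).out)
    rw [← e1, zpow_add, zpow_one, mul_assoc, ← e2]
  have e4 : t ^ expQ s (s * g) = t ^ (1 + expQ s g) := pow_transfer h e3
  unfold Fmap
  rw [hc, e4, zpow_add, zpow_one, mul_assoc]

lemma Fmap_inv {s t : G} (h : orderOf s = orderOf t)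
    (τ : Quotient (rightRel (zpowers s)) ≃ Quotient (rightRel (zpowers t))) (g : G) :
    Fmap t s τ.symm (Fmap s t τ g) = g := by
  have hu := Fmap_class s t τ g
  have e1 := expQ_spec t (Fmap s t τ g)
  rw [hu] at e1
  have e2 : Fmap s t τ g = t ^ expQ s g * (τ (Quotient.mk (rightRel (zpowers s)) g)).out := rfl
  have e3 : t ^ expQ t (Fmap s t τ g) = t ^ expQ s g := by
    apply mul_right_cancel (b := (τ (Quotient.mk (rightRel (zpowers s)) g)).out)
    rw [← e1, ← e2]
  have e4 : s ^ expQ t (Fmap s t τ g) = s ^ expQ s g := pow_transfer h.symm e3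
  show s ^ expQ t (Fmap s t τ g) * (τ.symm (Quotient.mk (rightRel (zpowers t)) (Fmap s t τ g))).out = g
  rw [hu, Equiv.symm_apply_apply, e4, ← expQ_spec s g]

noncomputable def fequiv (s t : G) (h : orderOf s = orderOf t)
    (τ : Quotient (rightRel (zpowers s)) ≃ Quotient (rightRel (zpowers t))) : G ≃ G where
  toFun := Fmap s t τ
  invFun := Fmap t s τ.symm
  left_inv := Fmap_inv h τ
  right_inv g := by simpa using Fmap_inv h.symm τ.symm g

lemma tau_exists (s t : G) (h : orderOf s = orderOf t) :
    Nonempty (Quotient (rightRel (zpowers s)) ≃ Quotient (rightRel (zpowers t))) := by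
  classical
  have c1 : Nat.card G = Nat.card (G ⧸ zpowers s) * orderOf s := by
    rw [Subgroup.card_eq_card_quotient_mul_card_subgroup (zpowers s), Nat.card_zpowers]
  have c2 : Nat.card G = Nat.card (G ⧸ zpowers t) * orderOf t := by
    rw [Subgroup.card_eq_card_quotient_mul_card_subgroup (zpowers t), Nat.card_zpowers]
  have hpos : 0 < orderOf t := orderOf_pos t
  have hcard : Nat.card (G ⧸ zpowers s) = Nat.card (G ⧸ zpowers t) :=
    Nat.eq_of_mul_eq_mul_right hpos (by rw [← h, ← c1, c2, h])
  haveI : Fintype (G ⧸ zpowers s) := Fintype.ofFinite _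
  haveI : Fintype (G ⧸ zpowers t) := Fintype.ofFinite _
  have : Fintype.card (G ⧸ zpowers s) = Fintype.card (G ⧸ zpowers t) := by
    rw [← Nat.card_eq_fintype_card, ← Nat.card_eq_fintype_card, hcard]
  exact ⟨((quotientRightRelEquivQuotientLeftRel (zpowers s)).trans
    (Fintype.equivOfCardEq this)).trans (quotientRightRelEquivQuotientLeftRel (zpowers t)).symm⟩

lemma bcay_iso {s t : G} (h : orderOf s = orderOf t) :
    Nonempty (BCay G {1, s} ≃g BCay G {1, t}) := by
  obtain ⟨τ⟩ := tau_exists s t h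
  let f : G ≃ G := fequiv s t h τ
  have key : ∀ a b : G, f b * (f a)⁻¹ ∈ ({1, t} : Set G) ↔ b * a⁻¹ ∈ ({1, s} : Set G) := by
    intro a b
    simp only [Set.mem_insert_iff, Set.mem_singleton_iff, mul_inv_eq_iff_eq_mul, one_mul]
    constructor
    · rintro (hfb | hfb)
      · exact Or.inl (f.injective hfb)
      · refine Or.inr (f.injective ?_)
        show f b = f (s * a)
        rw [show f (s * a) = t * f a from Fmap_equivariant h τ a, hfb]
    · rintro (hb | hb)
      · exact Or.inl (congrArg f hb)
      · subst hb
        exact Or.inr (Fmap_equivariant h τ a)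
  refine ⟨⟨Equiv.prodCongr f (Equiv.refl Bool), ?_⟩⟩
  rintro ⟨a, ba⟩ ⟨b, bb⟩
  show ((ba = false ∧ bb = true ∧ _) ∨ _) ↔ _
  simp only [Equiv.prodCongr_apply, Equiv.coe_refl, Prod.map, id_eq, BCay]
  constructor
  · rintro (⟨h1, h2, h3⟩ | ⟨h1, h2, h3⟩)
    · exact Or.inl ⟨h1, h2, (key a b).mp h3⟩
    · exact Or.inr ⟨h1, h2, (key b a).mp h3⟩
  · rintro (⟨h1, h2, h3⟩ | ⟨h1, h2, h3⟩)
    · exact Or.inl ⟨h1, h2, (key a b).mpr h3⟩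
    · exact Or.inr ⟨h1, h2, (key b a).mpr h3⟩

end FIFAux

/-- If for any two elements `s, t` of the same order, an isomorphism
`BCay(G,{1,s}) ≅ BCay(G,{1,t})` implies `{1,t} = g⁻¹·α({1,s})` or
`{1,t} = α({1,s}⁻¹)·g` for some `g ∈ G`, `α ∈ Aut(G)`, then `G` is an FIF-group. -/
theorem stmt_11 (G : Type*) [Group G] [Fintype G]
    (h : ∀ s t : G, orderOf s = orderOf t →
      Nonempty (BCay G {1, s} ≃g BCay G {1, t}) →
      ∃ (g : G) (α : G ≃* G),
        ({1, t} : Set G) = (fun u => g⁻¹ * α u) '' {1, s} ∨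
        ({1, t} : Set G) = (fun u => α u * g) '' ({1, s} : Set G)⁻¹) :
    ∀ x y : G, orderOf x = orderOf y →
      ∃ α : G ≃* G, α x = y ∨ α x = y⁻¹ := by
  intro x y hxy
  obtain ⟨g, α, hc | hc⟩ := h x y hxy (bcay_iso hxy)
  · rw [Set.image_pair] at hc
    simp only [map_one, mul_one] at hc
    have hmem : ∀ z : G, (z = 1 ∨ z = y) ↔ (z = g⁻¹ ∨ z = g⁻¹ * α x) := by
      intro z; simpa using Set.ext_iff.mp hc z
    have h1 := (hmem 1).mp (Or.inl rfl)
    have hy := (hmem y).mp (Or.inr rfl)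
    have hA := (hmem g⁻¹).mpr (Or.inl rfl)
    have hB := (hmem (g⁻¹ * α x)).mpr (Or.inr rfl)
    refine ⟨α, ?_⟩
    rcases hB with hB | hB
    · have hax : α x = g := (inv_mul_eq_one.mp hB).symm
      rcases hy with hy | hy
      · exact Or.inr (by rw [hax, hy, inv_inv])
      · have hy1 : y = 1 := hy.trans hB
        have hg : g = 1 := by
          rcases hA with hA | hA
          · exact inv_eq_one.mp hA
          · exact inv_eq_one.mp (hA.trans hy1)
        exact Or.inl (by rw [hax, hg, hy1])
    · rcases h1 with h1 | h1
      · have hg : g = 1 := inv_eq_one.mp h1.symm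
        exact Or.inl (by rw [← hB, hg, inv_one, one_mul])
      · have hy1 : y = 1 := (h1.trans hB).symm
        have hax : α x = g := (inv_mul_eq_one.mp h1.symm).symm
        have hg : g = 1 := by
          rcases hA with hA | hA
          · exact inv_eq_one.mp hA
          · exact inv_eq_one.mp (hA.trans hy1)
        exact Or.inl (by rw [hax, hg, hy1])
  · have hinv : ({1, x} : Set G)⁻¹ = {1, x⁻¹} := by
      rw [Set.inv_insert, Set.inv_singleton, inv_one]
    rw [hinv, Set.image_pair] at hc
    simp only [map_one, one_mul, map_inv] at hc
    have hmem : ∀ z : G, (z = 1 ∨ z = y) ↔ (z = g ∨ z = (α x)⁻¹ * g) := by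
      intro z; simpa using Set.ext_iff.mp hc z
    have h1 := (hmem 1).mp (Or.inl rfl)
    have hy := (hmem y).mp (Or.inr rfl)
    have hA := (hmem g).mpr (Or.inl rfl)
    have hB := (hmem ((α x)⁻¹ * g)).mpr (Or.inr rfl)
    refine ⟨α, ?_⟩
    rcases hB with hB | hB
    · have hax : α x = g := inv_mul_eq_one.mp hB
      rcases hy with hy | hy
      · exact Or.inl (hax.trans hy.symm)
      · have hy1 : y = 1 := hy.trans hB
        have hg : g = 1 := by
          rcases hA with hA | hA
          · exact hA
          · exact hA.trans hy1
        exact Or.inl (by rw [hax, hg, hy1])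
    · rcases h1 with h1 | h1
      · have hxi : (α x)⁻¹ = y := by rw [← hB, ← h1, mul_one]
        exact Or.inr (by rw [← hxi, inv_inv])
      · have hy1 : y = 1 := (h1.trans hB).symm
        have hax : α x = g := inv_mul_eq_one.mp h1.symm
        have hg : g = 1 := by
          rcases hA with hA | hA
          · exact hA
          · exact hA.trans hy1
        exact Or.inl (by rw [hax, hg, hy1])
end
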